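/- Let ∇ be a TM-connection on a vector bundle B → M and let 𝒟_∇(B) be the double representation of TM on B[0]⊕B[1], with structure operators ∂ = id_B, ∇^0 = ∇^1 = ∇ and K = −R_∇. For a vector subbundle C ⊂ B, the graded subbundle C[0]⊕B[1] is a subrepresentation of 𝒟_∇(B) if and only if ∇ preserves C (i.e. ∇_X Γ(C) ⊂ Γ(C) for all X ∈ Γ(TM)) and the induced connection ∇̂ on the quotient bundle B/C is flat. -/

import Mathlib

/-!
Algebraic (Lie–Rinehart style) model of Lie algebroids and 2-term representations
up to homotopy.  The commutative ring `R` plays the role of the ring of smooth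
functions `C^∞(M)` on the base, modules over `R` play the role of the modules of
sections of vector bundles over `M`, and `Derivation ℤ R R` plays the role of the
module of vector fields `Γ(TM)`.
-/

/-- A Lie algebroid over the base with function ring `R`, with module of sections `A`:
a Lie bracket on `A` together with an anchor map to vector fields (derivations of `R`),
satisfying the Leibniz rule. -/
structure LieAlgebroid (R : Type*) [CommRing R] (A : Type*) [AddCommGroup A] [Module R A] :
    Type _ where
  bracket : A → A → A
  anchor : A →ₗ[R] Derivation ℤ R R
  bracket_add_left : ∀ a b c, bracket (a + b) c = bracket a c + bracket b c
  bracket_add_right : ∀ a b c, bracket a (b + c) = bracket a b + bracket a c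
  bracket_skew : ∀ a b, bracket a b = - bracket b a
  bracket_jacobi : ∀ a b c,
    bracket a (bracket b c) = bracket (bracket a b) c + bracket b (bracket a c)
  bracket_smul : ∀ a (f : R) b, bracket a (f • b) = f • bracket a b + anchor a f • b
  anchor_bracket : ∀ a b, anchor (bracket a b) = ⁅anchor a, anchor b⁆

/-- An `A`-connection on the module (of sections) `V`, for a Lie algebroid `A`. -/
structure Connection (R : Type*) [CommRing R] {A : Type*} [AddCommGroup A] [Module R A]
    (L : LieAlgebroid R A) (V : Type*) [AddCommGroup V] [Module R V] : Type _ where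
  conn : A → V → V
  conn_add_left : ∀ a b v, conn (a + b) v = conn a v + conn b v
  conn_smul_left : ∀ (f : R) a v, conn (f • a) v = f • conn a v
  conn_add_right : ∀ a v w, conn a (v + w) = conn a v + conn a w
  conn_leibniz : ∀ a (f : R) v, conn a (f • v) = f • conn a v + L.anchor a f • v

/-- The curvature of a connection. -/
def Connection.curv {R : Type*} [CommRing R] {A : Type*} [AddCommGroup A] [Module R A]
    {L : LieAlgebroid R A} {V : Type*} [AddCommGroup V] [Module R V]
    (D : Connection R L V) (a b : A) (v : V) : V :=
  D.conn a (D.conn b v) - D.conn b (D.conn a v) - D.conn (L.bracket a b) v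

/-- A 2-term representation up to homotopy of the Lie algebroid `A` on `V₀[0] ⊕ V₁[1]`,
given by its structure operators `(∂, ∇, K)`:  a bundle map `∂ : V₀ → V₁`, a pair of
`A`-connections compatible with `∂`, and a 2-form `K` with values in `Hom(V₁, V₀)` which
is `d_{∇^Hom}`-closed and controls both curvatures. -/
structure TwoTermRUTH (R : Type*) [CommRing R] {A : Type*} [AddCommGroup A] [Module R A]
    (L : LieAlgebroid R A)
    (V0 V1 : Type*) [AddCommGroup V0] [Module R V0] [AddCommGroup V1] [Module R V1] :
    Type _ where
  d : V0 →ₗ[R] V1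
  conn0 : Connection R L V0
  conn1 : Connection R L V1
  d_conn : ∀ a v, d (conn0.conn a v) = conn1.conn a (d v)
  K : A → A → (V1 →ₗ[R] V0)
  K_add_left : ∀ a b c, K (a + b) c = K a c + K b c
  K_smul_left : ∀ (f : R) a b, K (f • a) b = f • K a b
  K_skew : ∀ a b, K a b = - K b a
  curv0 : ∀ a b v, conn0.curv a b v = - K a b (d v)
  curv1 : ∀ a b w, conn1.curv a b w = - d (K a b w)
  dK : ∀ a b c w,
      (conn0.conn a (K b c w) - K b c (conn1.conn a w))
    - (conn0.conn b (K a c w) - K a c (conn1.conn b w))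
    + (conn0.conn c (K a b w) - K a b (conn1.conn c w))
    - K (L.bracket a b) c w + K (L.bracket a c) b w - K (L.bracket b c) a w = 0

/-- A morphism of 2-term representations up to homotopy over a (Lie algebroid) morphism
`T : A → A'` of the underlying Lie algebroids, i.e. a morphism `(A, V) ⇒ (A, T^! W)`:
it is given by components `(φ₀, φ₁, Φ)` satisfying the usual four equations, in which
the structure operators of `W` are pulled back along `T`. -/
structure RUTHHomOver {R : Type*} [CommRing R]
    {A : Type*} [AddCommGroup A] [Module R A] {A' : Type*} [AddCommGroup A'] [Module R A']
    {L : LieAlgebroid R A} {L' : LieAlgebroid R A'}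
    (T : A →ₗ[R] A')
    {V0 V1 : Type*} [AddCommGroup V0] [Module R V0] [AddCommGroup V1] [Module R V1]
    {W0 W1 : Type*} [AddCommGroup W0] [Module R W0] [AddCommGroup W1] [Module R W1]
    (V : TwoTermRUTH R L V0 V1) (W : TwoTermRUTH R L' W0 W1) : Type _ where
  φ0 : V0 →ₗ[R] W0
  φ1 : V1 →ₗ[R] W1
  Φ : A →ₗ[R] (V1 →ₗ[R] W0)
  comm_d : ∀ v, φ1 (V.d v) = W.d (φ0 v)
  comm0 : ∀ a v, W.conn0.conn (T a) (φ0 v) - φ0 (V.conn0.conn a v) = Φ a (V.d v)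
  comm1 : ∀ a w, W.conn1.conn (T a) (φ1 w) - φ1 (V.conn1.conn a w) = W.d (Φ a w)
  commK : ∀ a b w,
      (W.conn0.conn (T a) (Φ b w) - Φ b (V.conn1.conn a w))
    - (W.conn0.conn (T b) (Φ a w) - Φ a (V.conn1.conn b w))
    - Φ (L.bracket a b) w
    = φ0 (V.K a b w) - W.K (T a) (T b) (φ1 w)

/-- A morphism of Lie algebroids over the identity of the base. -/
def IsLieAlgebroidHom {R : Type*} [CommRing R]
    {A : Type*} [AddCommGroup A] [Module R A] {A' : Type*} [AddCommGroup A'] [Module R A']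
    (L : LieAlgebroid R A) (L' : LieAlgebroid R A') (T : A →ₗ[R] A') : Prop :=
  (∀ a, L'.anchor (T a) = L.anchor a) ∧
  (∀ a b, T (L.bracket a b) = L'.bracket (T a) (T b))

/-- A graded subbundle `V = V₀ ⊕ V₁ ⊆ W₀ ⊕ W₁` (given by submodules of sections) is a
subrepresentation of the 2-term representation up to homotopy `W` if `V` carries a 2-term
representation up to homotopy of `A` making the inclusions, together with `Φ = 0`, the
components of a morphism `(A, V) ⇒ (A, W)`. -/
def IsSubrep {R : Type*} [CommRing R]
    {A : Type*} [AddCommGroup A] [Module R A] {L : LieAlgebroid R A}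
    {W0 W1 : Type*} [AddCommGroup W0] [Module R W0] [AddCommGroup W1] [Module R W1]
    (W : TwoTermRUTH R L W0 W1) (V0 : Submodule R W0) (V1 : Submodule R W1) : Prop :=
  ∃ (P : TwoTermRUTH R L V0 V1)
    (F : RUTHHomOver (LinearMap.id : A →ₗ[R] A) P W),
      F.φ0 = V0.subtype ∧ F.φ1 = V1.subtype ∧ F.Φ = 0

section Aux

variable {R : Type*} [CommRing R] {A : Type*} [AddCommGroup A] [Module R A]
  {L : LieAlgebroid R A} {V : Type*} [AddCommGroup V] [Module R V]

namespace Connection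

variable (D : Connection R L V)

lemma conn_zero_right (a : A) : D.conn a 0 = 0 := by
  have h := D.conn_add_right a 0 0
  rw [add_zero] at h
  exact left_eq_add.mp h

lemma conn_neg_right (a : A) (v : V) : D.conn a (-v) = - D.conn a v := by
  have h := D.conn_add_right a v (-v)
  rw [add_neg_cancel, D.conn_zero_right] at h
  have h' : D.conn a (-v) + D.conn a v = 0 := by rw [add_comm]; exact h.symm
  exact eq_neg_of_add_eq_zero_left h'

lemma conn_sub_right (a : A) (v w : V) : D.conn a (v - w) = D.conn a v - D.conn a w := by
  rw [sub_eq_add_neg, D.conn_add_right, D.conn_neg_right, sub_eq_add_neg]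

lemma conn_neg_left (a : A) (v : V) : D.conn (-a) v = - D.conn a v := by
  have h := D.conn_smul_left (-1 : R) a v
  simpa [neg_one_smul] using h

lemma conn_sub_left (a b : A) (v : V) : D.conn (a - b) v = D.conn a v - D.conn b v := by
  rw [sub_eq_add_neg, D.conn_add_left, D.conn_neg_left, sub_eq_add_neg]

lemma curv_add_right (a b : A) (v w : V) :
    D.curv a b (v + w) = D.curv a b v + D.curv a b w := by
  simp only [Connection.curv, D.conn_add_right]
  abel

lemma curv_smul_right (a b : A) (f : R) (v : V) :
    D.curv a b (f • v) = f • D.curv a b v := by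
  simp only [Connection.curv, D.conn_leibniz, D.conn_add_right, smul_sub,
    L.anchor_bracket, Derivation.commutator_apply, sub_smul]
  abel

lemma curv_add_left (a a' b : A) (v : V) :
    D.curv (a + a') b v = D.curv a b v + D.curv a' b v := by
  simp only [Connection.curv, D.conn_add_left, D.conn_add_right, L.bracket_add_left]
  abel

lemma curv_smul_left (f : R) (a b : A) (v : V) :
    D.curv (f • a) b v = f • D.curv a b v := by
  have hb : L.bracket (f • a) b = f • L.bracket a b - L.anchor b f • a := by
    rw [L.bracket_skew (f • a) b, L.bracket_smul, L.bracket_skew a b]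
    simp only [smul_neg]
    abel
  simp only [Connection.curv, hb, D.conn_sub_left, D.conn_smul_left, D.conn_leibniz, smul_sub]
  abel

lemma curv_skew (a b : A) (v : V) : D.curv a b v = - D.curv b a v := by
  simp only [Connection.curv, L.bracket_skew a b, D.conn_neg_left]
  abel

/-- Restriction of a connection to an invariant submodule. -/
def restrict {V : Type*} [AddCommGroup V] [Module R V] (D : Connection R L V)
    (S : Submodule R V) (h : ∀ a, ∀ v ∈ S, D.conn a v ∈ S) : Connection R L S where
  conn a v := ⟨D.conn a v.1, h a v.1 v.2⟩
  conn_add_left a b v := Subtype.ext (D.conn_add_left a b v.1)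
  conn_smul_left f a v := Subtype.ext (D.conn_smul_left f a v.1)
  conn_add_right a v w := Subtype.ext (by simp [D.conn_add_right])
  conn_leibniz a f v := Subtype.ext (by simp [D.conn_leibniz])

@[simp] lemma restrict_conn_coe {V : Type*} [AddCommGroup V] [Module R V]
    (D : Connection R L V) (S : Submodule R V) (h) (a : A) (v : S) :
    ((D.restrict S h).conn a v : V) = D.conn a v.1 := rfl

@[simp] lemma restrict_curv_coe {V : Type*} [AddCommGroup V] [Module R V]
    (D : Connection R L V) (S : Submodule R V) (h) (a b : A) (v : S) :
    ((D.restrict S h).curv a b v : V) = D.curv a b v.1 := by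
  simp [Connection.curv]

end Connection

end Aux

/-!
STATEMENT 13.  Let `∇` be a `TM`-connection on a vector bundle `B → M` and let
`𝒟_∇(B)` be the double representation of `TM` on `B[0] ⊕ B[1]`, with structure operators
`∂ = id_B`, `∇⁰ = ∇¹ = ∇` and `K = −R_∇`.  For a vector subbundle `C ⊆ B`, the graded
subbundle `C[0] ⊕ B[1]` is a subrepresentation of `𝒟_∇(B)` if and only if `∇` preserves
`C` and the induced connection `∇̂` on the quotient `B/C` is flat.

Here `TM` is modelled by the Lie algebroid of vector fields: the module
`Derivation ℤ R R` with the identity anchor and the commutator bracket.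
-/
theorem double_representation_subrep_iff
    {R : Type*} [CommRing R]
    {B : Type*} [AddCommGroup B] [Module R B]
    -- the tangent Lie algebroid `TM`
    (LT : LieAlgebroid R (Derivation ℤ R R))
    (hanchor : ∀ X, LT.anchor X = X)
    (hbracket : ∀ X Y, LT.bracket X Y = ⁅X, Y⁆)
    -- a `TM`-connection `∇` on `B`
    (D : Connection R LT B)
    -- the double representation `𝒟_∇(B)` of `TM` on `B[0] ⊕ B[1]`
    (Drep : TwoTermRUTH R LT B B)
    (hd : Drep.d = LinearMap.id)
    (h0 : ∀ X b, Drep.conn0.conn X b = D.conn X b)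
    (h1 : ∀ X b, Drep.conn1.conn X b = D.conn X b)
    (hK : ∀ X Y b, Drep.K X Y b = - D.curv X Y b)
    -- a vector subbundle `C ⊆ B`
    (C : Submodule R B) :
    IsSubrep Drep C (⊤ : Submodule R B) ↔
      ((∀ X, ∀ c ∈ C, D.conn X c ∈ C) ∧
       (∃ Dq : Derivation ℤ R R → B ⧸ C → B ⧸ C,
          (∀ X b, Dq X (Submodule.Quotient.mk b) = Submodule.Quotient.mk (D.conn X b)) ∧
          (∀ X Y q, Dq X (Dq Y q) - Dq Y (Dq X q) - Dq ⁅X, Y⁆ q = 0))) := by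
  constructor
  · rintro ⟨P, F, hφ0, hφ1, hΦ⟩
    have hpres : ∀ X, ∀ c ∈ C, D.conn X c ∈ C := by
      intro X c hc
      have h := F.comm0 X ⟨c, hc⟩
      rw [hΦ, hφ0] at h
      simp only [LinearMap.id_coe, id_eq, LinearMap.zero_apply, Submodule.coe_subtype,
        h0] at h
      have h' : D.conn X c = (P.conn0.conn X ⟨c, hc⟩ : B) := sub_eq_zero.mp h
      rw [h']
      exact (P.conn0.conn X ⟨c, hc⟩).2
    have hcurv : ∀ X Y b, D.curv X Y b ∈ C := by
      intro X Y b
      have h := F.commK X Y ⟨b, trivial⟩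
      rw [hΦ, hφ0, hφ1] at h
      simp only [LinearMap.zero_apply, LinearMap.id_coe, id_eq, Submodule.coe_subtype,
        Drep.conn0.conn_zero_right, sub_zero, zero_sub, neg_zero, sub_self, neg_neg] at h
      have hmem : Drep.K X Y b ∈ C := by
        have h' : Drep.K X Y b = (P.K X Y ⟨b, trivial⟩ : B) :=
          (sub_eq_zero.mp h.symm).symm
        rw [h']
        exact (P.K X Y ⟨b, trivial⟩).2
      rw [hK] at hmem
      simpa using C.neg_mem hmem
    refine ⟨hpres, ?_⟩
    have hrel : ∀ (X : Derivation ℤ R R) (x y : B), Submodule.quotientRel C x y →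
        (Submodule.Quotient.mk (D.conn X x) : B ⧸ C) = Submodule.Quotient.mk (D.conn X y) := by
      intro X x y hxy
      rw [Submodule.Quotient.eq, ← D.conn_sub_right]
      exact hpres X _ ((Submodule.quotientRel_def C).mp hxy)
    refine ⟨fun X q => Quotient.liftOn' q (fun b => Submodule.Quotient.mk (D.conn X b))
      (hrel X), fun X b => rfl, ?_⟩
    intro X Y q
    induction q using Quotient.inductionOn' with
    | h b =>
      show (Submodule.Quotient.mk (D.conn X (D.conn Y b)) : B ⧸ C)
          - Submodule.Quotient.mk (D.conn Y (D.conn X b))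
          - Submodule.Quotient.mk (D.conn ⁅X, Y⁆ b) = 0
      rw [← Submodule.Quotient.mk_sub, ← Submodule.Quotient.mk_sub,
        Submodule.Quotient.mk_eq_zero]
      have : D.conn X (D.conn Y b) - D.conn Y (D.conn X b) - D.conn ⁅X, Y⁆ b
          = D.curv X Y b := by
        rw [Connection.curv, hbracket]
      rw [this]
      exact hcurv X Y b
  · rintro ⟨hpres, Dq, hDqmk, hDqflat⟩
    have hcurv : ∀ X Y b, D.curv X Y b ∈ C := by
      intro X Y b
      have h := hDqflat X Y (Submodule.Quotient.mk b)
      simp only [hDqmk] at h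
      rw [← Submodule.Quotient.mk_sub, ← Submodule.Quotient.mk_sub,
        Submodule.Quotient.mk_eq_zero] at h
      have e : D.conn X (D.conn Y b) - D.conn Y (D.conn X b) - D.conn ⁅X, Y⁆ b
          = D.curv X Y b := by
        rw [Connection.curv, hbracket]
      rwa [e] at h
    -- the sub-2-term-RUTH on `C[0] ⊕ B[1]`
    refine ⟨{
      d := { toFun := fun c => ⟨c.1, trivial⟩, map_add' := fun _ _ => rfl,
             map_smul' := fun _ _ => rfl }
      conn0 := D.restrict C (fun a v hv => hpres a v hv)
      conn1 := D.restrict ⊤ (fun _ _ _ => trivial)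
      d_conn := fun a v => rfl
      K := fun X Y => {
        toFun := fun w => ⟨- D.curv X Y w.1, C.neg_mem (hcurv X Y w.1)⟩
        map_add' := fun w w' => Subtype.ext (by simp [D.curv_add_right]; abel)
        map_smul' := fun f w => Subtype.ext (by simp [D.curv_smul_right]) }
      K_add_left := fun a b c => LinearMap.ext fun w => Subtype.ext
        (by simp [D.curv_add_left]; abel)
      K_smul_left := fun f a b => LinearMap.ext fun w => Subtype.ext
        (by simp [D.curv_smul_left])
      K_skew := fun a b => LinearMap.ext fun w => Subtype.ext
        (by simp [D.curv_skew a b])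
      curv0 := fun a b v => Subtype.ext (by simp)
      curv1 := fun a b w => Subtype.ext (by simp; exact D.restrict_curv_coe _ _ a b w)
      dK := fun a b c w => by
        apply Subtype.ext
        have h := Drep.dK a b c w.1
        simp only [h0, h1, hK] at h
        push_cast
        simp at h ⊢
        exact h
      }, {
      φ0 := C.subtype
      φ1 := (⊤ : Submodule R B).subtype
      Φ := 0
      comm_d := fun v => by simp [hd]
      comm0 := fun a v => by simp [h0]
      comm1 := fun a w => by simp [h1, hd]; exact sub_self _
      commK := fun a b w => by
        simp [hK, Drep.conn0.conn_zero_right]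
      }, rfl, rfl, rfl⟩
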